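/- arXiv:1911.03609 — 2 statements merged into one kernel-verified Lean document; each statement's English description precedes it below -/
import Mathlib

section
/- If the local rule R of a d-state 3-neighborhood cellular automaton is unbalanced (i.e., the fiber sizes |R⁻¹(s)| are not all equal to d²), then for every n ≥ 3 the global map G_n on length-n periodic configurations is not surjective, hence not bijective. -/
/-- The periodic-boundary global map of a 3-neighborhood `d`-state CA with local rule `R`. -/
def glob {d : ℕ} (R : Fin d → Fin d → Fin d → Fin d) (n : ℕ)
    (c : ZMod n → Fin d) : ZMod n → Fin d :=
  fun i => R (c (i - 1)) (c i) (c (i + 1))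

/-- If a rule is unbalanced (some fiber does not have size d²), then for every n ≥ 3
the global map Gₙ is not surjective, hence not bijective. -/
theorem unbalanced_not_surjective {d : ℕ} (R : Fin d → Fin d → Fin d → Fin d)
    (h : ¬ ∀ s : Fin d,
      (Finset.univ.filter fun t : Fin d × Fin d × Fin d => R t.1 t.2.1 t.2.2 = s).card = d ^ 2) :
    ∀ n : ℕ, 3 ≤ n →
      ¬ Function.Surjective (glob R n) ∧ ¬ Function.Bijective (glob R n) := by
  intro n hn
  haveI : NeZero n := ⟨by omega⟩
  haveI : Fact (1 < n) := ⟨by omega⟩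
  push_neg at h
  obtain ⟨s₀, hs₀⟩ := h
  have hd : d ≠ 0 := by rintro rfl; exact s₀.elim0
  obtain ⟨d', rfl⟩ := Nat.exists_eq_succ_of_ne_zero hd
  suffices hns : ¬ Function.Surjective (glob R n) by
    exact ⟨hns, fun hb => hns hb.2⟩
  intro hsurj
  have hbij : Function.Bijective (glob R n) := hsurj.bijective_of_finite
  -- distinctness of the three positions
  have h10 : (1 : ZMod n) ≠ 0 := one_ne_zero
  have hm10 : (-1 : ZMod n) ≠ 0 := neg_ne_zero.mpr one_ne_zero
  have hm11 : (-1 : ZMod n) ≠ 1 := by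
    intro hcon
    have h2 : ((2 : ℕ) : ZMod n) = 0 := by
      push_cast
      linear_combination -hcon
    rw [ZMod.natCast_eq_zero_iff] at h2
    have := Nat.le_of_dvd (by norm_num) h2
    omega
  -- evaluation map
  set ev : (ZMod n → Fin (d' + 1)) → Fin (d' + 1) × Fin (d' + 1) × Fin (d' + 1) :=
    fun x => (x (-1), x 0, x 1) with hev
  set K := (Finset.univ.filter fun x : ZMod n → Fin (d' + 1) => ev x = (0, 0, 0)).card with hK
  -- all fibers of ev have the same cardinality
  have fib : ∀ t : Fin (d' + 1) × Fin (d' + 1) × Fin (d' + 1),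
      (Finset.univ.filter fun x => ev x = t).card = K := by
    intro t
    set c : ZMod n → Fin (d' + 1) := fun l =>
      if l = -1 then t.1 else if l = 0 then t.2.1 else if l = 1 then t.2.2 else 0 with hc
    have hcm1 : c (-1) = t.1 := by simp [hc]
    have hc0 : c 0 = t.2.1 := by simp [hc, Ne.symm hm10]
    have hc1 : c 1 = t.2.2 := by simp [hc, Ne.symm hm11, h10]
    rw [hK]
    apply Finset.card_nbij' (fun x => x - c) (fun x => x + c)
    · intro x hx
      simp only [Finset.mem_coe, Finset.mem_filter, Finset.mem_univ, true_and, hev, Prod.ext_iff] at hx ⊢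
      obtain ⟨h1, h2, h3⟩ := hx
      simp [Pi.sub_apply, hcm1, hc0, hc1, h1, h2, h3]
    · intro x hx
      simp only [Finset.mem_coe, Finset.mem_filter, Finset.mem_univ, true_and, hev, Prod.ext_iff] at hx ⊢
      obtain ⟨h1, h2, h3⟩ := hx
      simp [Pi.add_apply, hcm1, hc0, hc1, h1, h2, h3]
    · intro x _; simp
    · intro x _; simp
  have Kpos : 0 < K := by
    rw [hK]
    apply Finset.card_pos.mpr
    exact ⟨fun _ => 0, by simp [hev]⟩
  -- number of x with glob x 0 = s
  have hN : ∀ s : Fin (d' + 1),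
      (Finset.univ.filter fun x : ZMod n → Fin (d' + 1) => glob R n x 0 = s).card
      = (Finset.univ.filter
          fun t : Fin (d' + 1) × Fin (d' + 1) × Fin (d' + 1) => R t.1 t.2.1 t.2.2 = s).card * K := by
    intro s
    have hmaps : ∀ x ∈ (Finset.univ.filter fun x : ZMod n → Fin (d' + 1) => glob R n x 0 = s),
        ev x ∈ (Finset.univ.filter
          fun t : Fin (d' + 1) × Fin (d' + 1) × Fin (d' + 1) => R t.1 t.2.1 t.2.2 = s) := by
      intro x hx
      simp only [Finset.mem_filter, Finset.mem_univ, true_and, glob, hev] at hx ⊢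
      simpa [zero_sub, zero_add] using hx
    rw [Finset.card_eq_sum_card_fiberwise hmaps]
    have hterm : ∀ t ∈ (Finset.univ.filter
        fun t : Fin (d' + 1) × Fin (d' + 1) × Fin (d' + 1) => R t.1 t.2.1 t.2.2 = s),
        ((Finset.univ.filter fun x : ZMod n → Fin (d' + 1) => glob R n x 0 = s).filter
          fun x => ev x = t).card = K := by
      intro t ht
      simp only [Finset.mem_filter, Finset.mem_univ, true_and] at ht
      rw [Finset.filter_filter]
      have heq : (Finset.univ.filter fun x : ZMod n → Fin (d' + 1) =>
            glob R n x 0 = s ∧ ev x = t)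
          = Finset.univ.filter fun x => ev x = t := by
        apply Finset.filter_congr
        intro x _
        constructor
        · exact fun hx => hx.2
        · intro hx
          refine ⟨?_, hx⟩
          have h1 := congrArg Prod.fst hx
          have h2 := congrArg (fun p : Fin (d'+1) × Fin (d'+1) × Fin (d'+1) => p.2.1) hx
          have h3 := congrArg (fun p : Fin (d'+1) × Fin (d'+1) × Fin (d'+1) => p.2.2) hx
          simp only [hev] at h1 h2 h3
          simpa [glob, zero_sub, zero_add, h1, h2, h3] using ht
      rw [heq, fib t]
    rw [Finset.sum_congr rfl hterm, Finset.sum_const, smul_eq_mul]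
  -- number of y with y 0 = s is independent of s
  have hM : ∀ s : Fin (d' + 1),
      (Finset.univ.filter fun y : ZMod n → Fin (d' + 1) => y 0 = s).card
      = (Finset.univ.filter fun y : ZMod n → Fin (d' + 1) => y 0 = s₀).card := by
    intro s
    apply Finset.card_nbij' (fun y => fun l => y l + (s₀ - s)) (fun y => fun l => y l - (s₀ - s))
    · intro y hy
      simp only [Finset.mem_coe, Finset.mem_filter, Finset.mem_univ, true_and] at hy ⊢
      rw [hy]; abel
    · intro y hy
      simp only [Finset.mem_coe, Finset.mem_filter, Finset.mem_univ, true_and] at hy ⊢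
      rw [hy]; abel
    · intro y _; funext l; simp
    · intro y _; funext l; simp
  -- bijectivity transfers counts
  have key : ∀ s : Fin (d' + 1),
      (Finset.univ.filter fun x : ZMod n → Fin (d' + 1) => glob R n x 0 = s).card
      = (Finset.univ.filter fun y : ZMod n → Fin (d' + 1) => y 0 = s).card := by
    intro s
    set e := Equiv.ofBijective _ hbij with he
    apply Finset.card_nbij' (fun x => glob R n x) (fun y => e.symm y)
    · intro x hx
      simpa using (Finset.mem_filter.mp hx).2
    · intro y hy
      simp only [Finset.mem_coe, Finset.mem_filter, Finset.mem_univ, true_and] at hy ⊢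
      have hg : glob R n (e.symm y) = y := e.apply_symm_apply y
      rw [hg]; exact hy
    · intro x _; exact e.symm_apply_apply x
    · intro y _; exact e.apply_symm_apply y
  -- all local-rule fibers have equal cardinality
  have hFeq : ∀ s : Fin (d' + 1),
      (Finset.univ.filter
        fun t : Fin (d' + 1) × Fin (d' + 1) × Fin (d' + 1) => R t.1 t.2.1 t.2.2 = s).card
      = (Finset.univ.filter
        fun t : Fin (d' + 1) × Fin (d' + 1) × Fin (d' + 1) => R t.1 t.2.1 t.2.2 = s₀).card := by
    intro s
    have e1 := (hN s).symm.trans ((key s).trans ((hM s).trans ((key s₀).symm.trans (hN s₀))))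
    exact Nat.eq_of_mul_eq_mul_right Kpos e1
  have hsum : (Finset.univ : Finset (Fin (d' + 1) × Fin (d' + 1) × Fin (d' + 1))).card
      = ∑ s : Fin (d' + 1), (Finset.univ.filter
        fun t : Fin (d' + 1) × Fin (d' + 1) × Fin (d' + 1) => R t.1 t.2.1 t.2.2 = s).card :=
    Finset.card_eq_sum_card_fiberwise (fun t _ => Finset.mem_univ _)
  rw [Finset.card_univ, Fintype.card_prod, Fintype.card_prod, Fintype.card_fin] at hsum
  rw [Finset.sum_congr rfl (fun s _ => hFeq s), Finset.sum_const, smul_eq_mul] at hsum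
  have hcardu : (Finset.univ : Finset (Fin (d' + 1))).card = d' + 1 := by simp
  rw [hcardu] at hsum
  apply hs₀
  have hfin : (Finset.univ.filter
      fun t : Fin (d' + 1) × Fin (d' + 1) × Fin (d' + 1) => R t.1 t.2.1 t.2.2 = s₀).card
      = (d' + 1) * (d' + 1) :=
    Nat.eq_of_mul_eq_mul_left (Nat.succ_pos d') hsum.symm
  rw [hfin, pow_two]
end

section
/- Elementary CA rule 105, given by R(x,y,z) = 1 + x + y + z (mod 2), has injective global map G_n on length-n periodic configurations if and only if 3 does not divide n. -/
/-- Elementary CA rule 105: complemented sum of the three neighbors mod 2. -/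
def rule105 : Fin 2 → Fin 2 → Fin 2 → Fin 2 :=
  fun x y z => 1 + x + y + z

/-- ECA rule 105 has injective global map on length-n periodic configurations iff
3 does not divide n. -/
theorem rule105_injective_iff :
    ∀ n : ℕ, Function.Injective (glob rule105 n) ↔ ¬ (3 ∣ n) := by
  intro n
  constructor
  · -- injective → ¬ 3 ∣ n
    intro hinj hdvd
    set f : ZMod n →+* ZMod 3 := ZMod.castHom hdvd (ZMod 3) with hf
    set d : ZMod n → Fin 2 := fun i => if f i = 0 then 0 else 1 with hd
    have hglob : glob rule105 n d = glob rule105 n (fun _ => 0) := by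
      funext i
      simp only [glob, rule105, hd]
      have h1 : f (i - 1) = f i - 1 := by rw [map_sub, map_one]
      have h2 : f (i + 1) = f i + 1 := by rw [map_add, map_one]
      rw [h1, h2]
      have key : ∀ t : ZMod 3,
          (1 : Fin 2) + (if t - 1 = 0 then (0:Fin 2) else 1)
            + (if t = 0 then (0:Fin 2) else 1)
            + (if t + 1 = 0 then (0:Fin 2) else 1) = 1 + 0 + 0 + 0 := by decide
      exact key (f i)
    have h0 : d = fun _ => 0 := hinj hglob
    have h1 : d 1 = 1 := by
      simp only [hd, map_one]
      norm_num
    rw [h0] at h1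
    simp at h1
  · -- ¬ 3 ∣ n → injective
    intro h3 c c' hcc
    have hn : n ≠ 0 := by rintro rfl; exact h3 (dvd_zero 3)
    haveI : NeZero n := ⟨hn⟩
    set d : ZMod n → Fin 2 := fun i => c i + c' i with hd
    have rel : ∀ i : ZMod n, d (i - 1) + d i + d (i + 1) = 0 := by
      intro i
      have h := congrFun hcc i
      simp only [glob, rule105] at h
      have L1 : ∀ a b e a' b' e' : Fin 2,
          1 + a + b + e = 1 + a' + b' + e' →
            (a + a') + (b + b') + (e + e') = 0 := by decide
      exact L1 _ _ _ _ _ _ h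
    have step : ∀ i : ZMod n, d (i + 3) = d i := by
      intro i
      have r1 := rel (i + 1)
      have r2 := rel (i + 2)
      have e1 : i + 1 - 1 = i := by ring
      have e2 : i + 1 + 1 = i + 2 := by ring
      have e3 : i + 2 - 1 = i + 1 := by ring
      have e4 : i + 2 + 1 = i + 3 := by ring
      rw [e1, e2] at r1
      rw [e3, e4] at r2
      have L2 : ∀ a b e g : Fin 2, a + b + e = 0 → b + e + g = 0 → g = a := by decide
      exact L2 _ _ _ _ r1 r2
    have claim : ∀ m : ℕ, d ((3 * m : ℕ) : ZMod n) = d 0 := by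
      intro m
      induction m with
      | zero => norm_num
      | succ m ih =>
        have e : ((3 * (m + 1) : ℕ) : ZMod n) = ((3 * m : ℕ) : ZMod n) + 3 := by
          push_cast; ring
        rw [e, step, ih]
    have hcop : Nat.Coprime 3 n := (Nat.prime_three.coprime_iff_not_dvd).mpr h3
    have hu : IsUnit (3 : ZMod n) := by
      have := (ZMod.isUnit_iff_coprime 3 n).mpr hcop
      simpa using this
    obtain ⟨b, hb⟩ := hu.exists_right_inv
    have hall : ∀ i : ZMod n, d i = d 0 := by
      intro i
      have hm : ((3 * (b * i).val : ℕ) : ZMod n) = i := by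
        push_cast
        rw [ZMod.natCast_rightInverse (b * i)]
        rw [← mul_assoc, hb, one_mul]
      calc d i = d ((3 * (b * i).val : ℕ) : ZMod n) := by rw [hm]
        _ = d 0 := claim _
      
    have hd0 : d 0 = 0 := by
      have r := rel 0
      rw [hall (0 - 1), hall (0 + 1)] at r
      have L3 : ∀ a : Fin 2, a + a + a = 0 → a = 0 := by decide
      exact L3 _ r
    funext i
    have : d i = 0 := by rw [hall i, hd0]
    have L4 : ∀ a b : Fin 2, a + b = 0 → a = b := by decide
    exact L4 _ _ this
end
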